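/- There are exactly (2n-1 choose n) faces of the polytope P_{Γ_{2n}} that are copies of the Birkhoff polytope B_n. Equivalently, the number of subgraphs of the complete general graph Γ_{2n} isomorphic to the complete bipartite graph K_{n,n} is (2n-1 choose n), and each such subgraph defines a face of P_{Γ_{2n}} affinely isomorphic to B_n. -/
import Mathlib


open Finset

/-- A magic labeling of the finite graph with vertex set `V` and edge set `E`
(loops allowed), of magic sum `r`. -/
def IsMagic {V : Type*} [Fintype V] [DecidableEq V]
    (E : Finset (Sym2 V)) (L : Sym2 V → ℕ) (r : ℕ) : Prop :=
  (∀ e, e ∉ E → L e = 0) ∧ ∀ v : V, ∑ e ∈ E with v ∈ e, L e = r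

/-- The polytope `P_G` of magic labelings of the graph with edge set `E`. -/
def PG {V : Type*} [Fintype V] [DecidableEq V] (E : Finset (Sym2 V)) : Set (Sym2 V → ℝ) :=
  {x | (∀ e, e ∉ E → x e = 0) ∧ (∀ e, 0 ≤ x e) ∧ ∀ v : V, ∑ e ∈ E with v ∈ e, x e = 1}

/-- A face of a polytope `P`: either `P` itself, or the (nonempty) intersection of `P`
with a supporting hyperplane. -/
def IsFaceOf {W : Type*} [AddCommGroup W] [Module ℝ W] (F P : Set W) : Prop :=
  F = P ∨ ∃ (c : W →ₗ[ℝ] ℝ) (δ : ℝ), c ≠ 0 ∧ (∀ x ∈ P, c x ≤ δ) ∧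
    (∃ x ∈ P, c x = δ) ∧ F = {x ∈ P | c x = δ}

/-- The Birkhoff polytope `B_n` of `n × n` doubly stochastic matrices. -/
def Birkhoff (n : ℕ) : Set (Matrix (Fin n) (Fin n) ℝ) :=
  {M | (∀ i j, 0 ≤ M i j) ∧ (∀ i, ∑ j, M i j = 1) ∧ (∀ j, ∑ i, M i j = 1)}

/-- `E'` is the edge set of a subgraph of the complete general graph `Γ_{2n}` isomorphic
to the complete bipartite graph `K_{n,n}`: there is a set `A` of `n` vertices such that
the edges of `E'` are exactly the pairs joining `A` to its complement. -/
def IsKnnSubgraph (n : ℕ) (E' : Finset (Sym2 (Fin (2 * n)))) : Prop :=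
  ∃ A : Finset (Fin (2 * n)), A.card = n ∧
    ∀ e : Sym2 (Fin (2 * n)), e ∈ E' ↔ ∃ u v, u ∈ A ∧ v ∉ A ∧ e = s(u, v)




lemma knn_compl {V : Type*} [Fintype V] [DecidableEq V] (A : Finset V) (e : Sym2 V) :
    (∃ u v, u ∈ A ∧ v ∉ A ∧ e = s(u, v)) ↔ (∃ u v, u ∈ Aᶜ ∧ v ∉ Aᶜ ∧ e = s(u, v)) := by
  constructor
  · rintro ⟨u, v, hu, hv, rfl⟩
    exact ⟨v, u, by simpa using hv, by simpa using hu, Sym2.eq_swap⟩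
  · rintro ⟨u, v, hu, hv, rfl⟩
    exact ⟨v, u, by simpa using hv, by simpa using hu, Sym2.eq_swap⟩

lemma filter_eq_image {V : Type*} [Fintype V] [DecidableEq V] {A : Finset V} {E' : Finset (Sym2 V)}
    (hE : ∀ e : Sym2 V, e ∈ E' ↔ ∃ u v, u ∈ A ∧ v ∉ A ∧ e = s(u, v))
    {u : V} (hu : u ∈ A) :
    E'.filter (fun e => u ∈ e) = Aᶜ.image (fun v => s(u, v)) := by
  ext e
  simp only [mem_filter, mem_image, mem_compl, hE]
  constructor
  · rintro ⟨⟨u', v', hu', hv', rfl⟩, hmem⟩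
    rw [Sym2.mem_iff] at hmem
    rcases hmem with rfl | rfl
    · exact ⟨v', hv', rfl⟩
    · exact absurd hu hv'
  · rintro ⟨v, hv, rfl⟩
    exact ⟨⟨u, v, hu, hv, rfl⟩, by simp⟩

lemma sum_filter_eq {V : Type*} [Fintype V] [DecidableEq V] {A : Finset V} {E' : Finset (Sym2 V)}
    (hE : ∀ e : Sym2 V, e ∈ E' ↔ ∃ u v, u ∈ A ∧ v ∉ A ∧ e = s(u, v))
    {u : V} (hu : u ∈ A) (x : Sym2 V → ℝ) :
    ∑ e ∈ E' with u ∈ e, x e = ∑ v ∈ Aᶜ, x s(u, v) := by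
  rw [filter_eq_image hE hu]
  refine Finset.sum_image ?_
  intro v hv v' hv' h
  rw [Sym2.eq_iff] at h
  rcases h with ⟨-, rfl⟩ | ⟨rfl, rfl⟩
  · rfl
  · exact absurd hu (by simpa using hv)

lemma part2 {n : ℕ} {V : Type*} [Fintype V] [DecidableEq V] (A : Finset V)
    (E' : Finset (Sym2 V)) (hA : A.card = n) (hAc : Aᶜ.card = n)
    (hE : ∀ e : Sym2 V, e ∈ E' ↔ ∃ u v, u ∈ A ∧ v ∉ A ∧ e = s(u, v)) :
    ∃ f : (Sym2 V → ℝ) →ᵃ[ℝ] Matrix (Fin n) (Fin n) ℝ,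
      Set.BijOn f (PG E') (Birkhoff n) := by
  classical
  set aE : ↥A ≃ Fin n := A.equivFinOfCardEq hA with haE
  set bE : ↥(Aᶜ) ≃ Fin n := Aᶜ.equivFinOfCardEq hAc with hbE
  set a : Fin n → V := fun i => ↑(aE.symm i) with ha_def
  set b : Fin n → V := fun j => ↑(bE.symm j) with hb_def
  have ha : ∀ i, a i ∈ A := fun i => (aE.symm i).2
  have hb : ∀ j, b j ∈ Aᶜ := fun j => (bE.symm j).2
  have hbA : ∀ j, b j ∉ A := fun j => by simpa using hb j
  have haI : Function.Injective a := fun i i' h =>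
    aE.symm.injective (Subtype.ext h)
  have hbI : Function.Injective b := fun j j' h =>
    bE.symm.injective (Subtype.ext h)
  have key : ∀ i j i' j', s(a i, b j) = s(a i', b j') → i = i' ∧ j = j' := by
    intro i j i' j' h
    rw [Sym2.eq_iff] at h
    rcases h with ⟨h1, h2⟩ | ⟨h1, h2⟩
    · exact ⟨haI h1, hbI h2⟩
    · exact absurd (h1 ▸ ha i) (hbA j')
  set L : (Sym2 V → ℝ) →ₗ[ℝ] Matrix (Fin n) (Fin n) ℝ :=
    { toFun := fun x => Matrix.of fun i j => x s(a i, b j)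
      map_add' := fun x y => rfl
      map_smul' := fun c x => rfl } with hL
  have hLapp : ∀ x i j, L x i j = x s(a i, b j) := fun _ _ _ => rfl
  -- row and column sum identities
  have hE' : ∀ e : Sym2 V, e ∈ E' ↔ ∃ u v, u ∈ Aᶜ ∧ v ∉ Aᶜ ∧ e = s(u, v) :=
    fun e => (hE e).trans (knn_compl A e)
  have row : ∀ (x : Sym2 V → ℝ) i, ∑ e ∈ E' with a i ∈ e, x e = ∑ j, L x i j := by
    intro x i
    rw [sum_filter_eq hE (ha i), ← Finset.sum_coe_sort,
      ← Equiv.sum_comp bE.symm (fun v : ↥Aᶜ => x s(a i, ↑v))]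
    rfl
  have col : ∀ (x : Sym2 V → ℝ) j, ∑ e ∈ E' with b j ∈ e, x e = ∑ i, L x i j := by
    intro x j
    rw [sum_filter_eq hE' (hb j)]
    rw [compl_compl, ← Finset.sum_coe_sort,
      ← Equiv.sum_comp aE.symm (fun u : ↥A => x s(b j, ↑u))]
    exact Finset.sum_congr rfl fun i _ => by rw [hLapp, Sym2.eq_swap]
  refine ⟨L.toAffineMap, ?_, ?_, ?_⟩
  · -- MapsTo
    rintro x ⟨hx0, hxn, hxs⟩
    refine ⟨fun i j => hxn _, fun i => ?_, fun j => ?_⟩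
    · show ∑ j, L x i j = 1
      rw [← row x i]; exact hxs (a i)
    · show ∑ i, L x i j = 1
      rw [← col x j]; exact hxs (b j)
  · -- InjOn
    rintro x ⟨hx0, -, -⟩ y ⟨hy0, -, -⟩ h
    funext e
    by_cases he : e ∈ E'
    · obtain ⟨u, v, hu, hv, rfl⟩ := (hE e).1 he
      have hau : a (aE ⟨u, hu⟩) = u := by simp [ha_def]
      have hbv : b (bE ⟨v, by simpa using hv⟩) = v := by simp [hb_def]
      have := congrFun (congrFun h (aE ⟨u, hu⟩)) (bE ⟨v, by simpa using hv⟩)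
      simpa [LinearMap.toAffineMap, hLapp, hau, hbv] using this
    · rw [hx0 e he, hy0 e he]
  · -- SurjOn
    rintro M ⟨hMn, hMr, hMc⟩
    set x : Sym2 V → ℝ := fun e =>
      if h : ∃ p : Fin n × Fin n, e = s(a p.1, b p.2) then M h.choose.1 h.choose.2 else 0
      with hx_def
    have hxval : ∀ i j, x s(a i, b j) = M i j := by
      intro i j
      have hex : ∃ p : Fin n × Fin n, s(a i, b j) = s(a p.1, b p.2) := ⟨(i, j), rfl⟩
      simp only [hx_def, dif_pos hex]
      obtain ⟨h1, h2⟩ := key _ _ _ _ hex.choose_spec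
      rw [← h1, ← h2]
    have hfx : L x = M := by
      ext i j
      rw [hLapp, hxval]
    have hx0 : ∀ e, e ∉ E' → x e = 0 := by
      intro e he
      have hne : ¬ ∃ p : Fin n × Fin n, e = s(a p.1, b p.2) := by
        rintro ⟨p, rfl⟩
        exact he ((hE _).2 ⟨a p.1, b p.2, ha _, hbA _, rfl⟩)
      simp only [hx_def, dif_neg hne]
    have hxn : ∀ e, 0 ≤ x e := by
      intro e
      simp only [hx_def]
      split
      · exact hMn _ _
      · exact le_refl 0
    refine ⟨x, ⟨hx0, hxn, ?_⟩, ?_⟩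
    · intro v
      by_cases hv : v ∈ A
      · have : a (aE ⟨v, hv⟩) = v := by simp [ha_def]
        rw [← this, row x (aE ⟨v, hv⟩), hfx]
        exact hMr _
      · have hv' : v ∈ Aᶜ := by simpa using hv
        have : b (bE ⟨v, hv'⟩) = v := by simp [hb_def]
        rw [← this, col x (bE ⟨v, hv'⟩), hfx]
        exact hMc _
    · show L x = M
      exact hfx


lemma PG_sum_eq {V : Type*} [Fintype V] [DecidableEq V] (E' : Finset (Sym2 V))
    (x : Sym2 V → ℝ) (h0 : ∀ e ∉ E', x e = 0) (v : V) :
    ∑ e ∈ univ with v ∈ e, x e = ∑ e ∈ E' with v ∈ e, x e := by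
  refine (Finset.sum_subset (Finset.filter_subset_filter _ (Finset.subset_univ E')) ?_).symm
  intro e he hne
  exact h0 e fun hmem => hne (Finset.mem_filter.2 ⟨hmem, (Finset.mem_filter.1 he).2⟩)

lemma PG_subset {V : Type*} [Fintype V] [DecidableEq V] (E' : Finset (Sym2 V)) :
    PG E' ⊆ PG (univ : Finset (Sym2 V)) := by
  rintro x ⟨h0, hn, hs⟩
  exact ⟨fun e he => absurd (Finset.mem_univ e) he, hn,
    fun v => (PG_sum_eq E' x h0 v).trans (hs v)⟩

lemma face_lemma {V : Type*} [Fintype V] [DecidableEq V] (E' : Finset (Sym2 V))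
    (hne : (PG E').Nonempty) :
    IsFaceOf (PG E') (PG (univ : Finset (Sym2 V))) := by
  classical
  by_cases hEq : E' = univ
  · exact Or.inl (by rw [hEq])
  · right
    obtain ⟨e0, he0⟩ : ∃ e0, e0 ∉ E' := by
      by_contra h
      push_neg at h
      exact hEq (Finset.eq_univ_of_forall h)
    set c : (Sym2 V → ℝ) →ₗ[ℝ] ℝ :=
      { toFun := fun x => ∑ e ∈ E'ᶜ, -x e
        map_add' := fun x y => by simp [neg_add, Finset.sum_add_distrib, add_comm]
        map_smul' := fun r x => by simp [Finset.mul_sum] } with hc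
    have hcapp : ∀ x : Sym2 V → ℝ, c x = ∑ e ∈ E'ᶜ, -x e := fun _ => rfl
    have hcz : ∀ x : Sym2 V → ℝ, (∀ e ∉ E', x e = 0) → c x = 0 := by
      intro x h0
      rw [hcapp]
      refine Finset.sum_eq_zero fun e he => ?_
      rw [h0 e (Finset.mem_compl.1 he), neg_zero]
    refine ⟨c, 0, ?_, ?_, ?_, ?_⟩
    · intro h
      have h1 : c (fun e => if e = e0 then (1:ℝ) else 0) = 0 := by rw [h]; rfl
      rw [hcapp] at h1
      have h2 : ∑ e ∈ E'ᶜ, -(if e = e0 then (1:ℝ) else 0) = -1 := by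
        rw [Finset.sum_neg_distrib, Finset.sum_ite_eq' E'ᶜ e0 (fun _ => (1:ℝ)),
          if_pos (Finset.mem_compl.2 he0)]
      rw [h2] at h1
      norm_num at h1
    · rintro x ⟨-, hn, -⟩
      rw [hcapp]
      refine Finset.sum_nonpos fun e _ => ?_
      simpa using hn e
    · obtain ⟨x, hx⟩ := hne
      exact ⟨x, PG_subset E' hx, hcz x hx.1⟩
    · ext x
      constructor
      · rintro hx
        exact ⟨PG_subset E' hx, hcz x hx.1⟩
      · rintro ⟨⟨-, hn, hs⟩, hcx⟩
        have h0 : ∀ e ∉ E', x e = 0 := by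
          rw [hcapp] at hcx
          have : ∑ e ∈ E'ᶜ, x e = 0 := by
            have := hcx
            rw [Finset.sum_neg_distrib, neg_eq_zero] at this
            exact this
          intro e he
          exact (Finset.sum_eq_zero_iff_of_nonneg (fun e _ => hn e)).1 this e
            (Finset.mem_compl.2 he)
        exact ⟨h0, hn, fun v => ((PG_sum_eq E' x h0 v).symm).trans (hs v)⟩

lemma mem_E_iff {V : Type*} [DecidableEq V] {A : Finset V} {E' : Finset (Sym2 V)}
    (hE : ∀ e : Sym2 V, e ∈ E' ↔ ∃ u v, u ∈ A ∧ v ∉ A ∧ e = s(u, v)) (u v : V) :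
    s(u, v) ∈ E' ↔ (u ∈ A ∧ v ∉ A) ∨ (v ∈ A ∧ u ∉ A) := by
  rw [hE]
  constructor
  · rintro ⟨u', v', hu', hv', h⟩
    rw [Sym2.eq_iff] at h
    rcases h with ⟨rfl, rfl⟩ | ⟨rfl, rfl⟩
    · exact Or.inl ⟨hu', hv'⟩
    · exact Or.inr ⟨hu', hv'⟩
  · rintro (⟨hu, hv⟩ | ⟨hv, hu⟩)
    · exact ⟨u, v, hu, hv, rfl⟩
    · exact ⟨v, u, hv, hu, Sym2.eq_swap⟩

lemma count_zero : Nat.card {E' : Finset (Sym2 (Fin (2 * 0))) // IsKnnSubgraph 0 E'} = 1 := by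
  have hie : IsEmpty (Sym2 (Fin (2 * 0))) := by
    constructor
    intro e
    induction e using Sym2.ind with
    | _ x y => exact x.elim0
  rw [Nat.card_eq_one_iff_unique]
  refine ⟨⟨?_⟩, ⟨⟨∅, ∅, rfl, fun e => isEmptyElim e⟩⟩⟩
  rintro ⟨E1, -⟩ ⟨E2, -⟩
  exact Subtype.ext (Finset.ext fun e => isEmptyElim e)

lemma count_pos (n : ℕ) (hn : 0 < n) :
    Nat.card {E' : Finset (Sym2 (Fin (2 * n))) // IsKnnSubgraph n E'} =
      Nat.choose (2 * n - 1) n := by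
  classical
  set z : Fin (2 * n) := ⟨0, by omega⟩ with hz_def
  set Φ : Finset (Sym2 (Fin (2 * n))) → Finset (Fin (2 * n)) :=
    fun E' => univ.filter (fun v => s(z, v) ∉ E') with hΦ
  have recover : ∀ E' : Finset (Sym2 (Fin (2 * n))), IsKnnSubgraph n E' →
      z ∈ Φ E' ∧ (Φ E').card = n ∧
      ∀ e, e ∈ E' ↔ ∃ u v, u ∈ Φ E' ∧ v ∉ Φ E' ∧ e = s(u, v) := by
    rintro E' ⟨A₀, hA₀, hE₀⟩
    by_cases hz : z ∈ A₀
    · have hfil : Φ E' = A₀ := by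
        ext v
        simp only [hΦ, mem_filter, mem_univ, true_and, mem_E_iff hE₀]
        tauto
      rw [hfil]
      exact ⟨hz, hA₀, hE₀⟩
    · have hfil : Φ E' = A₀ᶜ := by
        ext v
        simp only [hΦ, mem_filter, mem_univ, true_and, mem_E_iff hE₀, mem_compl]
        tauto
      rw [hfil]
      refine ⟨by simpa using hz, ?_, fun e => (hE₀ e).trans (knn_compl A₀ e)⟩
      rw [card_compl, hA₀, Fintype.card_fin]
      omega
  set Ψ : Finset (Fin (2 * n)) → Finset (Sym2 (Fin (2 * n))) :=
    fun A => univ.filter (fun e => ∃ u v, u ∈ A ∧ v ∉ A ∧ e = s(u, v)) with hΨ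
  have hΨspec : ∀ A : Finset (Fin (2 * n)), ∀ e, e ∈ Ψ A ↔
      ∃ u v, u ∈ A ∧ v ∉ A ∧ e = s(u, v) := by
    intro A e
    simp [hΨ]
  have e1 : {E' : Finset (Sym2 (Fin (2 * n))) // IsKnnSubgraph n E'} ≃
      {A : Finset (Fin (2 * n)) // z ∈ A ∧ A.card = n} :=
    { toFun := fun p => ⟨Φ p.1, (recover p.1 p.2).1, (recover p.1 p.2).2.1⟩
      invFun := fun q => ⟨Ψ q.1, ⟨q.1, q.2.2, hΨspec q.1⟩⟩
      left_inv := by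
        rintro ⟨E', h⟩
        refine Subtype.ext (Finset.ext fun e => ?_)
        rw [hΨspec]
        exact ((recover E' h).2.2 e).symm
      right_inv := by
        rintro ⟨A, hzA, hcA⟩
        refine Subtype.ext (Finset.ext fun v => ?_)
        simp only [hΦ, mem_filter, mem_univ, true_and, mem_E_iff (hΨspec A)]
        tauto }
  have e2 : {A : Finset (Fin (2 * n)) // z ∈ A ∧ A.card = n} ≃
      {B // B ∈ (univ.erase z).powersetCard (n - 1)} :=
    { toFun := fun q => ⟨q.1.erase z, by
        rw [Finset.mem_powersetCard]
        exact ⟨Finset.erase_subset_erase z (Finset.subset_univ _),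
          by rw [Finset.card_erase_of_mem q.2.1, q.2.2]⟩⟩
      invFun := fun q => by
        have h := Finset.mem_powersetCard.1 q.2
        have hznB : z ∉ q.1 := fun hzB => by
          have := h.1 hzB
          simp at this
        exact ⟨insert z q.1, Finset.mem_insert_self _ _, by
          rw [Finset.card_insert_of_notMem hznB, h.2]; omega⟩
      left_inv := by
        rintro ⟨A, hzA, hcA⟩
        exact Subtype.ext (Finset.insert_erase hzA)
      right_inv := by
        rintro ⟨B, hB⟩
        have h := Finset.mem_powersetCard.1 hB
        have hznB : z ∉ B := fun hzB => by
          have := h.1 hzB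
          simp at this
        exact Subtype.ext (Finset.erase_insert hznB) }
  rw [Nat.card_congr (e1.trans e2), Nat.card_eq_fintype_card, Fintype.card_coe,
    Finset.card_powersetCard, Finset.card_erase_of_mem (Finset.mem_univ z),
    Finset.card_univ, Fintype.card_fin]
  have h1 : 2 * n - 1 - n = n - 1 := by omega
  rw [← h1, Nat.choose_symm (by omega)]
/-- There are exactly `(2n-1 choose n)` faces of `P_{Γ_{2n}}` that are copies of the
Birkhoff polytope `B_n`: the number of subgraphs of the complete general graph `Γ_{2n}`
isomorphic to `K_{n,n}` is `(2n-1 choose n)`, and each such subgraph defines a face of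
`P_{Γ_{2n}}` that is affinely isomorphic to `B_n`. -/
theorem birkhoff_faces_of_PGamma (n : ℕ) :
    Nat.card {E' : Finset (Sym2 (Fin (2 * n))) // IsKnnSubgraph n E'} =
      Nat.choose (2 * n - 1) n ∧
    ∀ E' : Finset (Sym2 (Fin (2 * n))), IsKnnSubgraph n E' →
      IsFaceOf (PG E') (PG (Finset.univ : Finset (Sym2 (Fin (2 * n))))) ∧
      ∃ f : (Sym2 (Fin (2 * n)) → ℝ) →ᵃ[ℝ] Matrix (Fin n) (Fin n) ℝ,
        Set.BijOn f (PG E') (Birkhoff n) := by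
  constructor
  · rcases Nat.eq_zero_or_pos n with rfl | hn
    · rw [count_zero]; rfl
    · exact count_pos n hn
  · rintro E' h
    obtain ⟨A, hA, hE⟩ := h
    have hAc : Aᶜ.card = n := by
      rw [card_compl, hA, Fintype.card_fin]
      omega
    obtain ⟨f, hf⟩ := part2 A E' hA hAc hE
    have hB : (1 : Matrix (Fin n) (Fin n) ℝ) ∈ Birkhoff n := by
      refine ⟨fun i j => ?_, fun i => by simp [Matrix.one_apply], fun j => by simp [Matrix.one_apply]⟩
      rw [Matrix.one_apply]
      split <;> norm_num
    obtain ⟨x, hx, -⟩ := hf.2.2 hB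
    exact ⟨face_lemma E' ⟨x, hx⟩, f, hf⟩
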